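/- (Merge or Leave) For each Q ∈ ℳ, with P-probability 1 over sequences sampled from P, at least one of the following holds: lim_{t→∞} w(Q | x_{<t}) = 0, or lim_{t→∞} d(P, Q | x_{<t}) = 0. -/

import Mathlib

open MeasureTheory Filter

/-- The cylinder set of infinite sequences agreeing with `x` on the first `t` coordinates,
i.e. the set of sequences beginning with the prefix `x_{<t}`. -/
def cyl {X : Type*} (x : ℕ → X) (t : ℕ) : Set (ℕ → X) := {y | ∀ i < t, y i = x i}

/-- `Q(x_{<t})`: the `Q`-measure of the cylinder set of sequences beginning with `x_{<t}`,
as a real number. -/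
noncomputable def prefProb {X : Type*} [MeasurableSpace X]
    (Q : Measure (ℕ → X)) (x : ℕ → X) (t : ℕ) : ℝ :=
  (Q (cyl x t)).toReal

/-- The posterior weight `w(Q i | x_{<t}) = w(Q i)·(Q i)(x_{<t}) / ∑_{j} w(Q j)·(Q j)(x_{<t})`. -/
noncomputable def post {X ι : Type*} [MeasurableSpace X]
    (w : ι → ℝ) (Q : ι → Measure (ℕ → X)) (i : ι) (x : ℕ → X) (t : ℕ) : ℝ :=
  w i * prefProb (Q i) x t / ∑' j, w j * prefProb (Q j) x t

/-- `Q(ℰ | x_{<t})`: the conditional probability, given the prefix `x_{<t}`, that the next `k`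
symbols form a string belonging to `ℰ ⊆ 𝒳^k`. -/
noncomputable def condProb {X : Type*} [MeasurableSpace X]
    (Q : Measure (ℕ → X)) (x : ℕ → X) (t k : ℕ) (E : Set (Fin k → X)) : ℝ :=
  (Q {y | y ∈ cyl x t ∧ (fun j : Fin k => y (t + j)) ∈ E}).toReal / prefProb Q x t

/-- The `k`-step variation distance
`d_k(P, Q | x_{<t}) = max_{ℰ ⊆ 𝒳^k} |P(ℰ | x_{<t}) − Q(ℰ | x_{<t})|`. -/
noncomputable def dk {X : Type*} [MeasurableSpace X]
    (P Q : Measure (ℕ → X)) (x : ℕ → X) (t k : ℕ) : ℝ :=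
  ⨆ E : Set (Fin k → X), |condProb P x t k E - condProb Q x t k E|

/-- The total variation distance `d(P, Q | x_{<t}) = lim_{k→∞} d_k(P, Q | x_{<t})`; since
`d_k` is non-decreasing in `k` and bounded by 1, the limit equals the supremum over `k`. -/
noncomputable def dTV {X : Type*} [MeasurableSpace X]
    (P Q : Measure (ℕ → X)) (x : ℕ → X) (t : ℕ) : ℝ :=
  ⨆ k : ℕ, dk P Q x t k

open scoped ENNReal

namespace MOL

section Basic

variable {X : Type*} [MeasurableSpace X]

/-- prefix map -/
def pre (X : Type*) (t : ℕ) : (ℕ → X) → (Fin t → X) := fun y j => y j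

lemma measurable_pre (t : ℕ) : Measurable (pre X t) :=
  measurable_pi_lambda _ (fun j => measurable_pi_apply _)

lemma cyl_eq_preimage (x : ℕ → X) (t : ℕ) :
    cyl x t = pre X t ⁻¹' {fun j : Fin t => x j} := by
  ext y
  simp only [cyl, Set.mem_setOf_eq, Set.mem_preimage, Set.mem_singleton_iff, funext_iff, pre]
  constructor
  · intro h j; exact h j j.2
  · intro h i hi; exact h ⟨i, hi⟩

lemma cyl_eq_preimage_self (x : ℕ → X) (t : ℕ) :
    cyl x t = pre X t ⁻¹' {pre X t x} := cyl_eq_preimage x t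

lemma cyl_congr {x y : ℕ → X} {t : ℕ} (hy : y ∈ cyl x t) : cyl y t = cyl x t := by
  have : pre X t y = pre X t x := funext fun j => hy j j.2
  rw [cyl_eq_preimage_self, this, ← cyl_eq_preimage_self]

/-- the filtration of prefix σ-algebras -/
def ff (X : Type*) [MeasurableSpace X] :
    Filtration ℕ (inferInstance : MeasurableSpace (ℕ → X)) where
  seq t := MeasurableSpace.comap (pre X t) inferInstance
  mono' := by
    intro s t hst A hA
    obtain ⟨B, hB, rfl⟩ := hA
    refine ⟨(fun (v : Fin t → X) (j : Fin s) => v (Fin.castLE hst j)) ⁻¹' B, ?_, rfl⟩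
    exact measurable_pi_lambda _ (fun j => measurable_pi_apply _) hB
  le' := fun t => (measurable_pre t).comap_le

variable [Fintype X] [MeasurableSingletonClass X]

lemma measurableSet_ff {t : ℕ} {S : Set (Fin t → X)} :
    MeasurableSet[ff X t] (pre X t ⁻¹' S) := by
  show MeasurableSet[MeasurableSpace.comap (pre X t) inferInstance] (pre X t ⁻¹' S)
  exact ⟨S, (Set.to_countable S).measurableSet, rfl⟩

lemma measurableSet_cyl_ff (x : ℕ → X) (t : ℕ) : MeasurableSet[ff X t] (cyl x t) := by
  rw [cyl_eq_preimage]; exact measurableSet_ff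

lemma measurableSet_cyl (x : ℕ → X) (t : ℕ) : MeasurableSet (cyl x t) :=
  (ff X).le t _ (measurableSet_cyl_ff x t)

/-- measurability of functions factoring through a prefix -/
lemma measurable_through_pre {β : Type*} [MeasurableSpace β] {t : ℕ} (h : (Fin t → X) → β) :
    Measurable[ff X t] (h ∘ pre X t) := by
  intro B hB
  rw [Set.preimage_comp]
  exact measurableSet_ff

lemma measurable_through_pre' {β : Type*} [MeasurableSpace β] {t : ℕ} (h : (Fin t → X) → β) :
    Measurable (h ∘ pre X t) :=
  (measurable_through_pre h).mono ((ff X).le t) le_rfl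

lemma iSup_ff : (⨆ t, ff X t) = (inferInstance : MeasurableSpace (ℕ → X)) := by
  refine le_antisymm (iSup_le fun t => (ff X).le t) ?_
  have hpi : (inferInstance : MeasurableSpace (ℕ → X))
      = ⨆ n : ℕ, MeasurableSpace.comap (fun y : ℕ → X => y n) inferInstance := rfl
  refine le_trans (le_of_eq hpi) (iSup_le fun n => ?_)
  refine le_trans ?_ (le_iSup (fun t => (ff X t : MeasurableSpace (ℕ → X))) (n+1))
  intro A hA
  obtain ⟨B, hB, rfl⟩ := hA
  have : (fun y : ℕ → X => y n) ⁻¹' B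
      = pre X (n+1) ⁻¹' ((fun v : Fin (n+1) → X => v ⟨n, Nat.lt_succ_self n⟩) ⁻¹' B) := rfl
  rw [this]
  exact measurableSet_ff

end Basic


section CE

variable {X : Type*} [Fintype X] [Nonempty X] [MeasurableSpace X] [MeasurableSingletonClass X]
variable (ξ : Measure (ℕ → X)) [IsProbabilityMeasure ξ]

/-- explicit conditional expectation given the first `t` coordinates -/
noncomputable def rce (f : (ℕ → X) → ℝ) (t : ℕ) (x : ℕ → X) : ℝ :=
  (∫ y in cyl x t, f y ∂ξ) / (ξ (cyl x t)).toReal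

/-- the atom-level version -/
noncomputable def atomCE (f : (ℕ → X) → ℝ) (t : ℕ) (v : Fin t → X) : ℝ :=
  (∫ y in pre X t ⁻¹' {v}, f y ∂ξ) / (ξ (pre X t ⁻¹' {v})).toReal

lemma rce_eq_comp (f : (ℕ → X) → ℝ) (t : ℕ) :
    rce ξ f t = (atomCE ξ f t) ∘ pre X t := by
  funext x
  simp only [rce, atomCE, Function.comp_apply, ← cyl_eq_preimage_self]

lemma rce_const_on {f : (ℕ → X) → ℝ} {t : ℕ} {x y : ℕ → X} (hy : y ∈ cyl x t) :
    rce ξ f t y = rce ξ f t x := by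
  simp only [rce, cyl_congr hy]

lemma measurable_rce (f : (ℕ → X) → ℝ) (t : ℕ) : Measurable[ff X t] (rce ξ f t) := by
  rw [rce_eq_comp]; exact measurable_through_pre _

lemma integrable_rce (f : (ℕ → X) → ℝ) (t : ℕ) : Integrable (rce ξ f t) ξ := by
  rw [rce_eq_comp]
  refine (integrable_const (‖atomCE ξ f t‖)).mono' ?_ (ae_of_all _ ?_)
  · exact ((measurable_through_pre _).mono ((ff X).le t) le_rfl).aestronglyMeasurable
  · intro x
    exact norm_le_pi_norm (atomCE ξ f t) (pre X t x)

lemma rce_ae_eq_condexp {f : (ℕ → X) → ℝ} (hf : Integrable f ξ) (t : ℕ) :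
    rce ξ f t =ᵐ[ξ] ξ[f | ff X t] := by
  haveI : SigmaFinite (ξ.trim ((ff X).le t)) := inferInstance
  refine ae_eq_condExp_of_forall_setIntegral_eq ((ff X).le t) hf
    (fun s _ _ => (integrable_rce ξ f t).integrableOn) (fun s hs _ => ?_)
    (StronglyMeasurable.aestronglyMeasurable (Measurable.stronglyMeasurable (measurable_rce ξ f t)))
  obtain ⟨S, -, rfl⟩ := hs
  have hdecomp : pre X t ⁻¹' S = ⋃ v ∈ (Set.toFinite S).toFinset, pre X t ⁻¹' {v} := by
    ext y
    simp [Set.mem_iUnion, Set.Finite.mem_toFinset]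
  have hmeas : ∀ v : Fin t → X, MeasurableSet (pre X t ⁻¹' {v}) :=
    fun v => (ff X).le t _ measurableSet_ff
  have hdisj : Set.Pairwise ((Set.toFinite S).toFinset : Set (Fin t → X))
      (Function.onFun Disjoint fun v => pre X t ⁻¹' {v}) := by
    intro a _ b _ hab
    exact Set.disjoint_left.2 fun y hya hyb => hab (by
      rw [Set.mem_preimage, Set.mem_singleton_iff] at hya hyb
      rw [← hya, hyb])
  have key : ∀ v : Fin t → X,
      ∫ y in pre X t ⁻¹' {v}, rce ξ f t y ∂ξ = ∫ y in pre X t ⁻¹' {v}, f y ∂ξ := by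
    intro v
    rcases eq_or_ne (ξ (pre X t ⁻¹' {v})) 0 with h0 | h0
    · rw [Measure.restrict_eq_zero.2 h0]
      simp
    · have hconst : ∀ y ∈ pre X t ⁻¹' {v}, rce ξ f t y = atomCE ξ f t v := by
        intro y hy
        have : pre X t y = v := hy
        rw [rce_eq_comp, Function.comp_apply, this]
      rw [setIntegral_congr_fun (hmeas v) hconst, setIntegral_const, atomCE, smul_eq_mul, measureReal_def,
        mul_div_cancel₀]
      exact ENNReal.toReal_ne_zero.2 ⟨h0, measure_ne_top _ _⟩
  rw [hdecomp,
    integral_biUnion_finset _ (fun v _ => hmeas v) hdisj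
      (fun v _ => (integrable_rce ξ f t).integrableOn),
    integral_biUnion_finset _ (fun v _ => hmeas v) hdisj (fun v _ => hf.integrableOn)]
  exact Finset.sum_congr rfl fun v _ => key v

/-- Lévy upward theorem, explicit version -/
lemma ae_tendsto_rce {f : (ℕ → X) → ℝ} (hf : Integrable f ξ) (hfm : StronglyMeasurable f) :
    ∀ᵐ x ∂ξ, Tendsto (fun t => rce ξ f t x) atTop (nhds (f x)) := by
  have hmeas : StronglyMeasurable[⨆ t, ff X t] f := by
    rw [iSup_ff]; exact hfm
  have h1 := hf.tendsto_ae_condExp hmeas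
  have h2 : ∀ᵐ x ∂ξ, ∀ t : ℕ, rce ξ f t x = (ξ[f | ff X t]) x :=
    ae_all_iff.2 fun t => rce_ae_eq_condexp ξ hf t
  filter_upwards [h1, h2] with x hx1 hx2
  refine hx1.congr ?_
  intro t
  exact (hx2 t).symm

end CE

section Pair

variable {X : Type*} [Fintype X] [Nonempty X] [MeasurableSpace X] [MeasurableSingletonClass X]
variable (μ ν : Measure (ℕ → X)) [IsProbabilityMeasure μ] [IsProbabilityMeasure ν]

/-- the density of `μ` w.r.t. `ν` -/
noncomputable def dens (x : ℕ → X) : ℝ := (μ.rnDeriv ν x).toReal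

/-- prefix likelihood ratio -/
noncomputable def bar (t : ℕ) (x : ℕ → X) : ℝ :=
  (μ (cyl x t)).toReal / (ν (cyl x t)).toReal

lemma dens_nonneg (x : ℕ → X) : 0 ≤ dens μ ν x := ENNReal.toReal_nonneg

lemma bar_nonneg (t : ℕ) (x : ℕ → X) : 0 ≤ bar μ ν t x :=
  div_nonneg ENNReal.toReal_nonneg ENNReal.toReal_nonneg

lemma measurable_dens : Measurable (dens μ ν) :=
  (Measure.measurable_rnDeriv μ ν).ennreal_toReal

lemma integrable_dens : Integrable (dens μ ν) ν :=
  Measure.integrable_toReal_rnDeriv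

lemma bar_eq_comp (t : ℕ) : bar μ ν t =
    ((fun v : Fin t → X => (μ (pre X t ⁻¹' {v})).toReal / (ν (pre X t ⁻¹' {v})).toReal)
      ∘ pre X t) ∘ (fun x => x) := by
  funext x
  simp only [bar, Function.comp_apply, ← cyl_eq_preimage_self]

lemma measurable_bar (t : ℕ) : Measurable (fun x => bar μ ν t x) := by
  have : (fun x => bar μ ν t x) = bar μ ν t := rfl
  rw [this, bar_eq_comp]
  exact (measurable_through_pre' _).comp measurable_id

lemma bar_congr {t : ℕ} {x y : ℕ → X} (hy : y ∈ cyl x t) : bar μ ν t y = bar μ ν t x := by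
  simp only [bar, cyl_congr hy]

lemma bar_eq_rce (hac : μ ≪ ν) (t : ℕ) (x : ℕ → X) :
    bar μ ν t x = rce ν (dens μ ν) t x := by
  simp only [bar, rce, dens]
  rw [Measure.setIntegral_toReal_rnDeriv hac (cyl x t)]
  rfl

lemma ae_tendsto_bar (hac : μ ≪ ν) :
    ∀ᵐ x ∂ν, Tendsto (fun t => bar μ ν t x) atTop (nhds (dens μ ν x)) := by
  filter_upwards [ae_tendsto_rce ν (integrable_dens μ ν) (measurable_dens μ ν).stronglyMeasurable]
    with x hx
  refine hx.congr fun t => (bar_eq_rce μ ν hac t x).symm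

variable {C : ℝ}

lemma bar_le (hC : ∀ s : Set (ℕ → X), (μ s).toReal ≤ C * (ν s).toReal) (t : ℕ) (x : ℕ → X) :
    bar μ ν t x ≤ C := by
  have h0 : (0:ℝ) ≤ C := by
    have := hC Set.univ
    simp only [measure_univ, ENNReal.toReal_one, mul_one] at this
    linarith
  rcases eq_or_lt_of_le (ENNReal.toReal_nonneg : (0:ℝ) ≤ (ν (cyl x t)).toReal) with h | h
  · simp only [bar, ← h, div_zero]; exact h0
  · rw [bar, div_le_iff₀ h]
    exact hC _

/-- the sup of future deviations of the likelihood ratios -/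
noncomputable def G (m : ℕ) (x : ℕ → X) : ℝ :=
  (⨆ s : ℕ, ENNReal.ofReal |dens μ ν x - bar μ ν (m + s) x|).toReal

lemma G_nonneg (m : ℕ) (x : ℕ → X) : 0 ≤ G μ ν m x := ENNReal.toReal_nonneg

section Gbd

variable (hC : ∀ s : Set (ℕ → X), (μ s).toReal ≤ C * (ν s).toReal)
include hC

lemma G_sup_le (m : ℕ) (x : ℕ → X) :
    (⨆ s : ℕ, ENNReal.ofReal |dens μ ν x - bar μ ν (m + s) x|)
      ≤ ENNReal.ofReal (dens μ ν x + C) := by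
  refine iSup_le fun s => ENNReal.ofReal_le_ofReal ?_
  have h1 := bar_nonneg μ ν (m + s) x
  have h2 := bar_le μ ν hC (m + s) x
  have h3 := dens_nonneg μ ν x
  rw [abs_le]
  constructor <;> linarith

lemma G_le (m : ℕ) (x : ℕ → X) : G μ ν m x ≤ dens μ ν x + C := by
  have hd : 0 ≤ dens μ ν x + C := by
    have h0 := bar_nonneg μ ν m x
    have h1 := bar_le μ ν hC m x
    have h2 := dens_nonneg μ ν x
    linarith
  have := ENNReal.toReal_mono (by simp) (G_sup_le μ ν hC m x)
  rwa [ENNReal.toReal_ofReal hd] at this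

lemma abs_le_G {m t : ℕ} (hmt : m ≤ t) (x : ℕ → X) :
    |dens μ ν x - bar μ ν t x| ≤ G μ ν m x := by
  have h1 : ENNReal.ofReal |dens μ ν x - bar μ ν t x|
      ≤ ⨆ s : ℕ, ENNReal.ofReal |dens μ ν x - bar μ ν (m + s) x| := by
    have := le_iSup (fun s : ℕ => ENNReal.ofReal |dens μ ν x - bar μ ν (m + s) x|) (t - m)
    rwa [Nat.add_sub_cancel' hmt] at this
  have h2 := ENNReal.toReal_mono
    (ne_top_of_le_ne_top (by simp) (G_sup_le μ ν hC m x)) h1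
  rwa [ENNReal.toReal_ofReal (abs_nonneg _)] at h2

lemma measurable_G (m : ℕ) : Measurable (G μ ν m) := by
  refine Measurable.ennreal_toReal ?_
  refine Measurable.iSup fun s => ?_
  exact ENNReal.measurable_ofReal.comp ((measurable_dens μ ν).sub
    (measurable_bar μ ν (m + s))).abs

lemma integrable_G (m : ℕ) : Integrable (G μ ν m) ν := by
  refine ((integrable_dens μ ν).add (integrable_const C)).mono'
    (measurable_G μ ν hC m).aestronglyMeasurable (ae_of_all _ fun x => ?_)
  rw [Real.norm_eq_abs, abs_of_nonneg (G_nonneg μ ν m x)]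
  exact G_le μ ν hC m x

lemma G_le_of_forall {m : ℕ} {x : ℕ → X} {δ : ℝ} (hδ : 0 ≤ δ)
    (h : ∀ t, m ≤ t → |dens μ ν x - bar μ ν t x| ≤ δ) : G μ ν m x ≤ δ := by
  have h1 : (⨆ s : ℕ, ENNReal.ofReal |dens μ ν x - bar μ ν (m + s) x|)
      ≤ ENNReal.ofReal δ :=
    iSup_le fun s => ENNReal.ofReal_le_ofReal (h (m + s) (Nat.le_add_right _ _))
  have h2 := ENNReal.toReal_mono (by simp) h1
  rwa [ENNReal.toReal_ofReal hδ] at h2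

end Gbd

end Pair

section TVdefs

variable {X : Type*} [Fintype X] [Nonempty X] [MeasurableSpace X] [MeasurableSingletonClass X]
variable (P Qm : Measure (ℕ → X)) [IsProbabilityMeasure P] [IsProbabilityMeasure Qm]

lemma condProb_nonneg (x : ℕ → X) (t k : ℕ) (E : Set (Fin k → X)) :
    0 ≤ condProb P x t k E :=
  div_nonneg ENNReal.toReal_nonneg ENNReal.toReal_nonneg

lemma condProb_le_one (x : ℕ → X) (t k : ℕ) (E : Set (Fin k → X)) :
    condProb P x t k E ≤ 1 := by
  have hnn : (0:ℝ) ≤ prefProb P x t := ENNReal.toReal_nonneg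
  rcases eq_or_lt_of_le hnn with h | h
  · rw [condProb, ← h, div_zero]; exact zero_le_one
  · rw [condProb, div_le_one h]
    exact ENNReal.toReal_mono (measure_ne_top _ _) (measure_mono fun y hy => hy.1)

lemma abs_condProb_sub_le_one (x : ℕ → X) (t k : ℕ) (E : Set (Fin k → X)) :
    |condProb P x t k E - condProb Qm x t k E| ≤ 1 := by
  have h1 := condProb_nonneg P x t k E
  have h2 := condProb_le_one P x t k E
  have h3 := condProb_nonneg Qm x t k E
  have h4 := condProb_le_one Qm x t k E
  rw [abs_le]; constructor <;> linarith

lemma dk_nonneg (x : ℕ → X) (t k : ℕ) : 0 ≤ dk P Qm x t k := by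
  unfold dk
  refine le_trans (abs_nonneg (condProb P x t k ∅ - condProb Qm x t k ∅))
    (le_ciSup (f := fun E : Set (Fin k → X) => |condProb P x t k E - condProb Qm x t k E|)
      ⟨1, ?_⟩ ∅)
  rintro a ⟨E, rfl⟩
  exact abs_condProb_sub_le_one P Qm x t k E

lemma dk_le_one (x : ℕ → X) (t k : ℕ) : dk P Qm x t k ≤ 1 :=
  ciSup_le fun E => abs_condProb_sub_le_one P Qm x t k E

lemma dTV_nonneg (x : ℕ → X) (t : ℕ) : 0 ≤ dTV P Qm x t := by
  unfold dTV
  refine le_trans (dk_nonneg P Qm x t 0) (le_ciSup ⟨1, ?_⟩ 0)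
  rintro a ⟨k, rfl⟩
  exact dk_le_one P Qm x t k

lemma dTV_le {x : ℕ → X} {t : ℕ} {a : ℝ}
    (h : ∀ (k : ℕ) (E : Set (Fin k → X)), |condProb P x t k E - condProb Qm x t k E| ≤ a) :
    dTV P Qm x t ≤ a := by
  unfold dTV dk
  exact ciSup_le fun k => ciSup_le fun E => h k E

end TVdefs

section Core

variable {X : Type*} [Fintype X] [Nonempty X] [MeasurableSpace X] [MeasurableSingletonClass X]
variable (P Qm ξ : Measure (ℕ → X))
variable [IsProbabilityMeasure P] [IsProbabilityMeasure Qm] [IsProbabilityMeasure ξ]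

lemma dTV_le_bound (hPac : P ≪ ξ) (hQac : Qm ≪ ξ) (x : ℕ → X) (t : ℕ)
    (hPC : P (cyl x t) ≠ 0) (hQC : Qm (cyl x t) ≠ 0) (hξC : ξ (cyl x t) ≠ 0) :
    dTV P Qm x t ≤
      (1 / bar P ξ t x) * rce ξ (fun y => |dens P ξ y - bar P ξ t x|) t x
      + (1 / bar Qm ξ t x) * rce ξ (fun y => |dens Qm ξ y - bar Qm ξ t x|) t x := by
  have hCm : MeasurableSet (cyl x t) := measurableSet_cyl x t
  have hξCpos : 0 < (ξ (cyl x t)).toReal := ENNReal.toReal_pos hξC (measure_ne_top _ _)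
  have hPCpos : 0 < (P (cyl x t)).toReal := ENNReal.toReal_pos hPC (measure_ne_top _ _)
  have hQCpos : 0 < (Qm (cyl x t)).toReal := ENNReal.toReal_pos hQC (measure_ne_top _ _)
  have hbppos : 0 < bar P ξ t x := div_pos hPCpos hξCpos
  have hbqpos : 0 < bar Qm ξ t x := div_pos hQCpos hξCpos
  have hPCeq : (P (cyl x t)).toReal = bar P ξ t x * (ξ (cyl x t)).toReal := by
    rw [bar, div_mul_cancel₀ _ (ne_of_gt hξCpos)]
  have hQCeq : (Qm (cyl x t)).toReal = bar Qm ξ t x * (ξ (cyl x t)).toReal := by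
    rw [bar, div_mul_cancel₀ _ (ne_of_gt hξCpos)]
  have hIP : Integrable (fun y => dens P ξ y) ξ := integrable_dens P ξ
  have hIQ : Integrable (fun y => dens Qm ξ y) ξ := integrable_dens Qm ξ
  have hIg : IntegrableOn
      (fun y => dens P ξ y / (P (cyl x t)).toReal - dens Qm ξ y / (Qm (cyl x t)).toReal)
      (cyl x t) ξ :=
    ((hIP.div_const _).sub (hIQ.div_const _)).integrableOn
  have hintP : IntegrableOn (fun y => |dens P ξ y - bar P ξ t x|) (cyl x t) ξ :=
    ((hIP.sub (integrable_const _)).abs).integrableOn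
  have hintQ : IntegrableOn (fun y => |dens Qm ξ y - bar Qm ξ t x|) (cyl x t) ξ :=
    ((hIQ.sub (integrable_const _)).abs).integrableOn
  refine dTV_le P Qm fun k E => ?_
  have hAsub : {y | y ∈ cyl x t ∧ (fun j : Fin k => y (t + j)) ∈ E} ⊆ cyl x t :=
    fun y hy => hy.1
  have hPA : condProb P x t k E
      = ∫ y in {y | y ∈ cyl x t ∧ (fun j : Fin k => y (t + j)) ∈ E},
          dens P ξ y / (P (cyl x t)).toReal ∂ξ := by
    have h1 : (∫ y in {y | y ∈ cyl x t ∧ (fun j : Fin k => y (t + j)) ∈ E},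
          dens P ξ y / (P (cyl x t)).toReal ∂ξ)
        = (∫ y in {y | y ∈ cyl x t ∧ (fun j : Fin k => y (t + j)) ∈ E},
          dens P ξ y ∂ξ) / (P (cyl x t)).toReal := integral_div _ _
    rw [h1]
    unfold dens
    rw [Measure.setIntegral_toReal_rnDeriv hPac]
    rfl
  have hQA : condProb Qm x t k E
      = ∫ y in {y | y ∈ cyl x t ∧ (fun j : Fin k => y (t + j)) ∈ E},
          dens Qm ξ y / (Qm (cyl x t)).toReal ∂ξ := by
    have h1 : (∫ y in {y | y ∈ cyl x t ∧ (fun j : Fin k => y (t + j)) ∈ E},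
          dens Qm ξ y / (Qm (cyl x t)).toReal ∂ξ)
        = (∫ y in {y | y ∈ cyl x t ∧ (fun j : Fin k => y (t + j)) ∈ E},
          dens Qm ξ y ∂ξ) / (Qm (cyl x t)).toReal := integral_div _ _
    rw [h1]
    unfold dens
    rw [Measure.setIntegral_toReal_rnDeriv hQac]
    rfl
  have hdiff : condProb P x t k E - condProb Qm x t k E
      = ∫ y in {y | y ∈ cyl x t ∧ (fun j : Fin k => y (t + j)) ∈ E},
          (dens P ξ y / (P (cyl x t)).toReal - dens Qm ξ y / (Qm (cyl x t)).toReal) ∂ξ := by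
    rw [hPA, hQA, integral_sub ((hIP.div_const _).integrableOn)
      ((hIQ.div_const _).integrableOn)]
  have habs : |condProb P x t k E - condProb Qm x t k E|
      ≤ ∫ y in {y | y ∈ cyl x t ∧ (fun j : Fin k => y (t + j)) ∈ E},
          |dens P ξ y / (P (cyl x t)).toReal - dens Qm ξ y / (Qm (cyl x t)).toReal| ∂ξ := by
    rw [hdiff]
    simpa [Real.norm_eq_abs] using norm_integral_le_integral_norm
      (μ := ξ.restrict {y | y ∈ cyl x t ∧ (fun j : Fin k => y (t + j)) ∈ E})
      (fun y => dens P ξ y / (P (cyl x t)).toReal - dens Qm ξ y / (Qm (cyl x t)).toReal)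
  have hmono : (∫ y in {y | y ∈ cyl x t ∧ (fun j : Fin k => y (t + j)) ∈ E},
          |dens P ξ y / (P (cyl x t)).toReal - dens Qm ξ y / (Qm (cyl x t)).toReal| ∂ξ)
      ≤ ∫ y in cyl x t,
          |dens P ξ y / (P (cyl x t)).toReal - dens Qm ξ y / (Qm (cyl x t)).toReal| ∂ξ :=
    setIntegral_mono_set hIg.abs (ae_of_all _ fun y => abs_nonneg _)
      (HasSubset.Subset.eventuallyLE hAsub)
  have hptwise : ∀ y, |dens P ξ y / (P (cyl x t)).toReal - dens Qm ξ y / (Qm (cyl x t)).toReal|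
      ≤ (1/(ξ (cyl x t)).toReal) * ((1/(bar P ξ t x)) * |dens P ξ y - bar P ξ t x|)
        + (1/(ξ (cyl x t)).toReal) * ((1/(bar Qm ξ t x)) * |dens Qm ξ y - bar Qm ξ t x|) := by
    intro y
    have hkey : dens P ξ y / (P (cyl x t)).toReal - dens Qm ξ y / (Qm (cyl x t)).toReal
        = (1/(ξ (cyl x t)).toReal) * ((1/(bar P ξ t x)) * (dens P ξ y - bar P ξ t x))
          - (1/(ξ (cyl x t)).toReal) * ((1/(bar Qm ξ t x)) * (dens Qm ξ y - bar Qm ξ t x)) := by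
      rw [hPCeq, hQCeq]
      field_simp
      ring
    rw [hkey]
    refine (abs_sub _ _).trans ?_
    rw [abs_mul, abs_mul, abs_mul, abs_mul,
      abs_of_nonneg (by positivity : (0:ℝ) ≤ 1/(ξ (cyl x t)).toReal),
      abs_of_nonneg (le_of_lt (by positivity : (0:ℝ) < 1/(bar P ξ t x))),
      abs_of_nonneg (le_of_lt (by positivity : (0:ℝ) < 1/(bar Qm ξ t x)))]
  have hmono2 : (∫ y in cyl x t,
          |dens P ξ y / (P (cyl x t)).toReal - dens Qm ξ y / (Qm (cyl x t)).toReal| ∂ξ)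
      ≤ ∫ y in cyl x t,
          ((1/(ξ (cyl x t)).toReal) * ((1/(bar P ξ t x)) * |dens P ξ y - bar P ξ t x|)
          + (1/(ξ (cyl x t)).toReal) * ((1/(bar Qm ξ t x)) * |dens Qm ξ y - bar Qm ξ t x|)) ∂ξ :=
    setIntegral_mono_on hIg.abs
      ((hintP.const_mul _).const_mul _ |>.add ((hintQ.const_mul _).const_mul _))
      hCm (fun y _ => hptwise y)
  have hsplit : (∫ y in cyl x t,
          ((1/(ξ (cyl x t)).toReal) * ((1/(bar P ξ t x)) * |dens P ξ y - bar P ξ t x|)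
          + (1/(ξ (cyl x t)).toReal) * ((1/(bar Qm ξ t x)) * |dens Qm ξ y - bar Qm ξ t x|)) ∂ξ)
      = (1 / bar P ξ t x) * rce ξ (fun y => |dens P ξ y - bar P ξ t x|) t x
        + (1 / bar Qm ξ t x) * rce ξ (fun y => |dens Qm ξ y - bar Qm ξ t x|) t x := by
    rw [integral_add ((hintP.const_mul _).const_mul _) ((hintQ.const_mul _).const_mul _),
      integral_const_mul, integral_const_mul, integral_const_mul, integral_const_mul]
    unfold rce
    field_simp
  calc |condProb P x t k E - condProb Qm x t k E|
      ≤ _ := habs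
    _ ≤ _ := hmono
    _ ≤ _ := hmono2
    _ = _ := hsplit

end Core

section GBound

variable {X : Type*} [Fintype X] [Nonempty X] [MeasurableSpace X] [MeasurableSingletonClass X]
variable (P Qm ξ : Measure (ℕ → X))
variable [IsProbabilityMeasure P] [IsProbabilityMeasure Qm] [IsProbabilityMeasure ξ]

lemma rce_mono_on {f g : (ℕ → X) → ℝ} (t : ℕ) (x : ℕ → X)
    (hf : IntegrableOn f (cyl x t) ξ) (hg : IntegrableOn g (cyl x t) ξ)
    (h : ∀ y ∈ cyl x t, f y ≤ g y) : rce ξ f t x ≤ rce ξ g t x := by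
  unfold rce
  gcongr ?_ / _
  exact setIntegral_mono_on hf hg (measurableSet_cyl x t) h

lemma dTV_le_G (hPac : P ≪ ξ) (hQac : Qm ≪ ξ) {CP CQ : ℝ}
    (hCP : ∀ s : Set (ℕ → X), (P s).toReal ≤ CP * (ξ s).toReal)
    (hCQ : ∀ s : Set (ℕ → X), (Qm s).toReal ≤ CQ * (ξ s).toReal)
    {m t : ℕ} (hmt : m ≤ t) (x : ℕ → X)
    (hPC : P (cyl x t) ≠ 0) (hQC : Qm (cyl x t) ≠ 0) (hξC : ξ (cyl x t) ≠ 0) :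
    dTV P Qm x t ≤ (1 / bar P ξ t x) * rce ξ (G P ξ m) t x
      + (1 / bar Qm ξ t x) * rce ξ (G Qm ξ m) t x := by
  refine (dTV_le_bound P Qm ξ hPac hQac x t hPC hQC hξC).trans ?_
  have hIP : Integrable (fun y => dens P ξ y) ξ := integrable_dens P ξ
  have hIQ : Integrable (fun y => dens Qm ξ y) ξ := integrable_dens Qm ξ
  have hP : rce ξ (fun y => |dens P ξ y - bar P ξ t x|) t x ≤ rce ξ (G P ξ m) t x := by
    refine rce_mono_on ξ t x ((hIP.sub (integrable_const _)).abs.integrableOn)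
      (integrable_G P ξ hCP m).integrableOn (fun y hy => ?_)
    rw [← bar_congr P ξ hy]
    exact abs_le_G P ξ hCP hmt y
  have hQ : rce ξ (fun y => |dens Qm ξ y - bar Qm ξ t x|) t x ≤ rce ξ (G Qm ξ m) t x := by
    refine rce_mono_on ξ t x ((hIQ.sub (integrable_const _)).abs.integrableOn)
      (integrable_G Qm ξ hCQ m).integrableOn (fun y hy => ?_)
    rw [← bar_congr Qm ξ hy]
    exact abs_le_G Qm ξ hCQ hmt y
  have h1 : (0:ℝ) ≤ 1 / bar P ξ t x := one_div_nonneg.mpr (bar_nonneg P ξ t x)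
  have h2 : (0:ℝ) ≤ 1 / bar Qm ξ t x := one_div_nonneg.mpr (bar_nonneg Qm ξ t x)
  exact add_le_add (mul_le_mul_of_nonneg_left hP h1) (mul_le_mul_of_nonneg_left hQ h2)

end GBound

section Mix

variable {X : Type*} [Fintype X] [Nonempty X] [MeasurableSpace X] [MeasurableSingletonClass X]
variable {ι : Type*} [Countable ι]
variable (Q : ι → Measure (ℕ → X)) (w : ι → ℝ)

/-- the Bayes mixture -/
noncomputable def mix : Measure (ℕ → X) := Measure.sum (fun j => (ENNReal.ofReal (w j)) • Q j)

lemma summable_w (hw1 : ∑' i, w i = 1) : Summable w := by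
  by_contra h
  rw [tsum_eq_zero_of_not_summable h] at hw1
  exact one_ne_zero hw1.symm

lemma mix_isProb (hQ : ∀ i, IsProbabilityMeasure (Q i)) (hw : ∀ i, 0 < w i)
    (hw1 : ∑' i, w i = 1) : IsProbabilityMeasure (mix Q w) := by
  constructor
  rw [mix, Measure.sum_apply _ MeasurableSet.univ]
  have h1 : ∀ j, (ENNReal.ofReal (w j) • Q j) Set.univ = ENNReal.ofReal (w j) := by
    intro j
    haveI := hQ j
    simp [Measure.smul_apply, measure_univ]
  simp only [h1]
  rw [← ENNReal.ofReal_tsum_of_nonneg (fun j => (hw j).le) (summable_w w hw1), hw1,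
    ENNReal.ofReal_one]

lemma le_mix (j : ι) : (ENNReal.ofReal (w j)) • Q j ≤ mix Q w := Measure.le_sum _ j

lemma ac_mix (hw : ∀ i, 0 < w i) (j : ι) : Q j ≪ mix Q w := by
  refine Measure.AbsolutelyContinuous.mk fun A hA h0 => ?_
  have h1 : (ENNReal.ofReal (w j) • Q j) A = 0 :=
    le_antisymm (le_trans (Measure.le_iff'.1 (le_mix Q w j) A) h0.le) zero_le
  rw [Measure.smul_apply, smul_eq_mul] at h1
  rcases mul_eq_zero.1 h1 with h | h
  · exact absurd h (by simp [ENNReal.ofReal_eq_zero, not_le, hw j])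
  · exact h

lemma toReal_le_mix (hQ : ∀ i, IsProbabilityMeasure (Q i)) (hw : ∀ i, 0 < w i)
    (hw1 : ∑' i, w i = 1) (j : ι) (s : Set (ℕ → X)) :
    ((Q j) s).toReal ≤ (1 / w j) * ((mix Q w) s).toReal := by
  haveI := hQ j
  haveI := mix_isProb Q w hQ hw hw1
  have h1 : ENNReal.ofReal (w j) * (Q j) s ≤ (mix Q w) s := by
    have := Measure.le_iff'.1 (le_mix Q w j) s
    rwa [Measure.smul_apply, smul_eq_mul] at this
  have hne : ENNReal.ofReal (w j) ≠ 0 := by simp [ENNReal.ofReal_eq_zero, not_le, hw j]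
  have h2 : (Q j) s ≤ (ENNReal.ofReal (w j))⁻¹ * (mix Q w) s := by
    calc (Q j) s = (ENNReal.ofReal (w j))⁻¹ * (ENNReal.ofReal (w j) * (Q j) s) := by
          rw [← mul_assoc, ENNReal.inv_mul_cancel hne ENNReal.ofReal_ne_top, one_mul]
      _ ≤ _ := mul_le_mul_right h1 _
  have hfin : (ENNReal.ofReal (w j))⁻¹ * (mix Q w) s ≠ ∞ :=
    ENNReal.mul_ne_top (ENNReal.inv_ne_top.2 hne) (measure_ne_top _ _)
  have h3 := ENNReal.toReal_mono hfin h2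
  rwa [ENNReal.toReal_mul, ENNReal.toReal_inv, ENNReal.toReal_ofReal (hw j).le,
    inv_eq_one_div] at h3

lemma prefProb_tsum (hQ : ∀ i, IsProbabilityMeasure (Q i)) (hw : ∀ i, 0 < w i) (x : ℕ → X)
    (t : ℕ) : ∑' j, w j * prefProb (Q j) x t = ((mix Q w) (cyl x t)).toReal := by
  have hne : ∀ j, (ENNReal.ofReal (w j) • Q j) (cyl x t) ≠ ∞ := by
    intro j
    haveI := hQ j
    rw [Measure.smul_apply, smul_eq_mul]
    exact ENNReal.mul_ne_top (by simp) (measure_ne_top _ _)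
  rw [mix, Measure.sum_apply _ (measurableSet_cyl x t), ENNReal.tsum_toReal_eq hne]
  refine tsum_congr fun j => ?_
  haveI := hQ j
  rw [Measure.smul_apply, smul_eq_mul, ENNReal.toReal_mul, ENNReal.toReal_ofReal (hw j).le]
  rfl

end Mix

end MOL

/-- **Merge or Leave.** For each `Q = Q i ∈ ℳ`, with probability 1 over sequences sampled from
the true measure `P = Q i₀ ∈ ℳ`, either the posterior weight of `Q` tends to `0`, or the
conditional measures of `Q` merge with those of `P` in total variation. -/
theorem merge_or_leave
    {X : Type*} [Fintype X] [Nonempty X] [MeasurableSpace X] [MeasurableSingletonClass X]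
    {ι : Type*} [Countable ι]
    (Q : ι → Measure (ℕ → X)) (hQ : ∀ i, IsProbabilityMeasure (Q i))
    (w : ι → ℝ) (hw : ∀ i, 0 < w i) (hw1 : ∑' i, w i = 1)
    (i₀ : ι) (i : ι) :
    ∀ᵐ x ∂(Q i₀),
      Tendsto (fun t => post w Q i x t) atTop (nhds 0) ∨
      Tendsto (fun t => dTV (Q i₀) (Q i) x t) atTop (nhds 0) := by
  classical
  haveI hPprob := hQ i₀
  haveI hQiprob := hQ i
  haveI hξprob : IsProbabilityMeasure (MOL.mix Q w) := MOL.mix_isProb Q w hQ hw hw1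
  have hPac : Q i₀ ≪ MOL.mix Q w := MOL.ac_mix Q w hw i₀
  have hQac : Q i ≪ MOL.mix Q w := MOL.ac_mix Q w hw i
  have hCP : ∀ s : Set (ℕ → X), ((Q i₀) s).toReal ≤ (1 / w i₀) * ((MOL.mix Q w) s).toReal :=
    MOL.toReal_le_mix Q w hQ hw hw1 i₀
  have hCQ : ∀ s : Set (ℕ → X), ((Q i) s).toReal ≤ (1 / w i) * ((MOL.mix Q w) s).toReal :=
    MOL.toReal_le_mix Q w hQ hw hw1 i
  have E1 := MOL.ae_tendsto_bar (Q i₀) (MOL.mix Q w) hPac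
  have E2 := MOL.ae_tendsto_bar (Q i) (MOL.mix Q w) hQac
  have E3 : ∀ᵐ x ∂(MOL.mix Q w), ∀ m : ℕ,
      Tendsto (fun t => MOL.rce (MOL.mix Q w) (MOL.G (Q i₀) (MOL.mix Q w) m) t x) atTop
        (nhds (MOL.G (Q i₀) (MOL.mix Q w) m x)) :=
    ae_all_iff.2 fun m => MOL.ae_tendsto_rce (MOL.mix Q w)
      (MOL.integrable_G _ _ hCP m) (MOL.measurable_G _ _ hCP m).stronglyMeasurable
  have E4 : ∀ᵐ x ∂(MOL.mix Q w), ∀ m : ℕ,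
      Tendsto (fun t => MOL.rce (MOL.mix Q w) (MOL.G (Q i) (MOL.mix Q w) m) t x) atTop
        (nhds (MOL.G (Q i) (MOL.mix Q w) m x)) :=
    ae_all_iff.2 fun m => MOL.ae_tendsto_rce (MOL.mix Q w)
      (MOL.integrable_G _ _ hCQ m) (MOL.measurable_G _ _ hCQ m).stronglyMeasurable
  have hZpos : ∀ᵐ x ∂(Q i₀), 0 < MOL.dens (Q i₀) (MOL.mix Q w) x := by
    filter_upwards [Measure.rnDeriv_pos hPac,
      hPac.ae_le (Measure.rnDeriv_lt_top (Q i₀) (MOL.mix Q w))] with x h1 h2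
    exact ENNReal.toReal_pos h1.ne' h2.ne
  filter_upwards [hPac.ae_le E1, hPac.ae_le E2, hPac.ae_le E3, hPac.ae_le E4, hZpos]
    with x hE1 hE2 hE3 hE4 hZ
  by_cases hY : MOL.dens (Q i) (MOL.mix Q w) x = 0
  · left
    have hpost : ∀ t, post w Q i x t = w i * MOL.bar (Q i) (MOL.mix Q w) t x := by
      intro t
      unfold post
      rw [MOL.prefProb_tsum Q w hQ hw x t, mul_div_assoc]
      rfl
    have hlim := hE2.const_mul (w i)
    rw [hY, mul_zero] at hlim
    exact Tendsto.congr (fun t => (hpost t).symm) hlim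
  · right
    have hYpos : 0 < MOL.dens (Q i) (MOL.mix Q w) x :=
      lt_of_le_of_ne (MOL.dens_nonneg _ _ x) (Ne.symm hY)
    rw [Metric.tendsto_atTop]
    intro ε hε
    have hden : (0:ℝ) < 4 / MOL.dens (Q i₀) (MOL.mix Q w) x
        + 4 / MOL.dens (Q i) (MOL.mix Q w) x + 1 := by positivity
    set δ := ε / (4 / MOL.dens (Q i₀) (MOL.mix Q w) x
        + 4 / MOL.dens (Q i) (MOL.mix Q w) x + 1) with hδdef
    have hδ : 0 < δ := div_pos hε hden
    -- choose m
    obtain ⟨T1, hT1⟩ := Metric.tendsto_atTop.1 hE1 δ hδ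
    obtain ⟨T2, hT2⟩ := Metric.tendsto_atTop.1 hE2 δ hδ
    have hGP : MOL.G (Q i₀) (MOL.mix Q w) (max T1 T2) x ≤ δ := by
      refine MOL.G_le_of_forall _ _ hCP hδ.le fun t ht => ?_
      have := hT1 t (le_trans (le_max_left _ _) ht)
      rw [Real.dist_eq] at this
      rw [abs_sub_comm]
      exact this.le
    have hGQ : MOL.G (Q i) (MOL.mix Q w) (max T1 T2) x ≤ δ := by
      refine MOL.G_le_of_forall _ _ hCQ hδ.le fun t ht => ?_
      have := hT2 t (le_trans (le_max_right _ _) ht)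
      rw [Real.dist_eq] at this
      rw [abs_sub_comm]
      exact this.le
    -- eventual behaviour in t
    obtain ⟨T3, hT3⟩ := Metric.tendsto_atTop.1 hE1 (MOL.dens (Q i₀) (MOL.mix Q w) x / 2)
      (by positivity)
    obtain ⟨T4, hT4⟩ := Metric.tendsto_atTop.1 hE2 (MOL.dens (Q i) (MOL.mix Q w) x / 2)
      (by positivity)
    obtain ⟨T5, hT5⟩ := Metric.tendsto_atTop.1 (hE3 (max T1 T2)) δ hδ
    obtain ⟨T6, hT6⟩ := Metric.tendsto_atTop.1 (hE4 (max T1 T2)) δ hδ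
    refine ⟨max (max (max T3 T4) (max T5 T6)) (max T1 T2), fun t ht => ?_⟩
    have htm : max T1 T2 ≤ t := le_trans (le_max_right _ _) ht
    have ht3 : T3 ≤ t := le_trans (le_trans (le_max_left _ _) (le_trans (le_max_left _ _)
      (le_max_left _ _))) ht
    have ht4 : T4 ≤ t := le_trans (le_trans (le_max_right _ _) (le_trans (le_max_left _ _)
      (le_max_left _ _))) ht
    have ht5 : T5 ≤ t := le_trans (le_trans (le_max_left _ _) (le_trans (le_max_right _ _)
      (le_max_left _ _))) ht
    have ht6 : T6 ≤ t := le_trans (le_trans (le_max_right _ _) (le_trans (le_max_right _ _)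
      (le_max_left _ _))) ht
    -- lower bounds on bar
    have hbarP : MOL.dens (Q i₀) (MOL.mix Q w) x / 2 ≤ MOL.bar (Q i₀) (MOL.mix Q w) t x := by
      have := hT3 t ht3
      rw [Real.dist_eq, abs_lt] at this
      linarith [this.1]
    have hbarQ : MOL.dens (Q i) (MOL.mix Q w) x / 2 ≤ MOL.bar (Q i) (MOL.mix Q w) t x := by
      have := hT4 t ht4
      rw [Real.dist_eq, abs_lt] at this
      linarith [this.1]
    have hbarPpos : 0 < MOL.bar (Q i₀) (MOL.mix Q w) t x :=
      lt_of_lt_of_le (by positivity) hbarP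
    have hbarQpos : 0 < MOL.bar (Q i) (MOL.mix Q w) t x :=
      lt_of_lt_of_le (by positivity) hbarQ
    -- nonvanishing measures
    have hPC : (Q i₀) (cyl x t) ≠ 0 := by
      intro h0
      rw [MOL.bar, h0] at hbarPpos
      simp at hbarPpos
    have hQC : (Q i) (cyl x t) ≠ 0 := by
      intro h0
      rw [MOL.bar, h0] at hbarQpos
      simp at hbarQpos
    have hξC : (MOL.mix Q w) (cyl x t) ≠ 0 := fun h0 => hPC (hPac h0)
    -- rce bounds
    have hrceP : MOL.rce (MOL.mix Q w) (MOL.G (Q i₀) (MOL.mix Q w) (max T1 T2)) t x ≤ 2 * δ := by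
      have := hT5 t ht5
      rw [Real.dist_eq, abs_lt] at this
      linarith [this.2, hGP]
    have hrceQ : MOL.rce (MOL.mix Q w) (MOL.G (Q i) (MOL.mix Q w) (max T1 T2)) t x ≤ 2 * δ := by
      have := hT6 t ht6
      rw [Real.dist_eq, abs_lt] at this
      linarith [this.2, hGQ]
    have hrcePnn : 0 ≤ MOL.rce (MOL.mix Q w) (MOL.G (Q i₀) (MOL.mix Q w) (max T1 T2)) t x := by
      unfold MOL.rce
      refine div_nonneg (setIntegral_nonneg (MOL.measurableSet_cyl x t) fun y _ =>
        MOL.G_nonneg _ _ _ y) ENNReal.toReal_nonneg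
    have hrceQnn : 0 ≤ MOL.rce (MOL.mix Q w) (MOL.G (Q i) (MOL.mix Q w) (max T1 T2)) t x := by
      unfold MOL.rce
      refine div_nonneg (setIntegral_nonneg (MOL.measurableSet_cyl x t) fun y _ =>
        MOL.G_nonneg _ _ _ y) ENNReal.toReal_nonneg
    -- 1/bar bounds
    have hinvP : 1 / MOL.bar (Q i₀) (MOL.mix Q w) t x
        ≤ 2 / MOL.dens (Q i₀) (MOL.mix Q w) x := by
      rw [div_le_div_iff₀ hbarPpos hZ]
      nlinarith [hbarP]
    have hinvQ : 1 / MOL.bar (Q i) (MOL.mix Q w) t x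
        ≤ 2 / MOL.dens (Q i) (MOL.mix Q w) x := by
      rw [div_le_div_iff₀ hbarQpos hYpos]
      nlinarith [hbarQ]
    have hmain := MOL.dTV_le_G (Q i₀) (Q i) (MOL.mix Q w) hPac hQac hCP hCQ htm x hPC hQC hξC
    have hbound : dTV (Q i₀) (Q i) x t
        ≤ (2 / MOL.dens (Q i₀) (MOL.mix Q w) x) * (2 * δ)
          + (2 / MOL.dens (Q i) (MOL.mix Q w) x) * (2 * δ) := by
      refine hmain.trans (add_le_add ?_ ?_)
      · exact mul_le_mul hinvP hrceP hrcePnn (by positivity)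
      · exact mul_le_mul hinvQ hrceQ hrceQnn (by positivity)
    rw [Real.dist_0_eq_abs, abs_of_nonneg (MOL.dTV_nonneg (Q i₀) (Q i) x t)]
    refine lt_of_le_of_lt hbound ?_
    have hεδ : ε = δ * (4 / MOL.dens (Q i₀) (MOL.mix Q w) x
        + 4 / MOL.dens (Q i) (MOL.mix Q w) x + 1) := by
      rw [hδdef, div_mul_cancel₀ _ (ne_of_gt hden)]
    rw [hεδ]
    have hkey : δ * (4 / MOL.dens (Q i₀) (MOL.mix Q w) x
          + 4 / MOL.dens (Q i) (MOL.mix Q w) x + 1)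
        - ((2 / MOL.dens (Q i₀) (MOL.mix Q w) x) * (2 * δ)
          + (2 / MOL.dens (Q i) (MOL.mix Q w) x) * (2 * δ)) = δ := by
      ring
    linarith [hδ, hkey]
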